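/- Let P ⊆ ℝ^n be a (0,k)-lattice polytope of dimension d, let σ = (π, ε) be a signed permutation of [n], let α ≥ 2k+1 be real, and let x_σ ∈ ℝ^n be the associated vector. Let v_0, v_1, …, v_m be a sequence of vertices of P such that for each i < m, the vertex v_{i+1} is a neighbor of v_i with x_σᵀv_{i+1} > x_σᵀv_i and x_σᵀv_{i+1} ≥ x_σᵀw for every neighbor w of v_i (a greatest-improvement step), and such that v_m has no neighbor w with x_σᵀw > x_σᵀv_m. Then v_m is the unique vertex maximizing x ↦ x_σᵀx over P and m ≤ dk. -/

import Mathlib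

open Set Finset

/-- The standard dot product on `Fin n → ℝ`. -/
def dotp {n : ℕ} (c x : Fin n → ℝ) : ℝ := ∑ i, c i * x i

/-- A polytope is the convex hull of a finite nonempty set of points. -/
def IsPolytope {n : ℕ} (P : Set (Fin n → ℝ)) : Prop :=
  ∃ S : Finset (Fin n → ℝ), S.Nonempty ∧ P = convexHull ℝ (S : Set (Fin n → ℝ))

/-- The dimension of a polytope: the dimension of its affine hull. -/
noncomputable def polytopeDim {n : ℕ} (P : Set (Fin n → ℝ)) : ℕ :=
  Module.finrank ℝ (affineSpan ℝ P).direction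

/-- A vertex of a polytope is an extreme point. -/
def IsVertexOf {n : ℕ} (P : Set (Fin n → ℝ)) (v : Fin n → ℝ) : Prop :=
  v ∈ Set.extremePoints ℝ P

/-- An edge of a polytope: a segment between two distinct vertices that is an
exposed face of `P`; its endpoints are then called neighbors. -/
def IsEdgeOf {n : ℕ} (P : Set (Fin n → ℝ)) (u v : Fin n → ℝ) : Prop :=
  u ≠ v ∧ IsVertexOf P u ∧ IsVertexOf P v ∧ IsExposed ℝ P (segment ℝ u v)

/-- A `c`-monotone path of length `m` in `P`: a sequence of `m+1` vertices of `P`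
such that consecutive vertices form edges of `P` and the value of `cᵀx` strictly
increases along the path. -/
def IsMonotonePath {n : ℕ} (P : Set (Fin n → ℝ)) (c : Fin n → ℝ) (m : ℕ)
    (p : Fin (m + 1) → (Fin n → ℝ)) : Prop :=
  (∀ i, IsVertexOf P (p i)) ∧
  ∀ i : Fin m, IsEdgeOf P (p i.castSucc) (p i.succ) ∧
    dotp c (p i.castSucc) < dotp c (p i.succ)

/-- A `(0,k)`-lattice polytope: a polytope all of whose vertices lie in
`ℤ^n ∩ [0,k]^n`. -/
def IsLatticePolytope {n : ℕ} (k : ℕ) (P : Set (Fin n → ℝ)) : Prop :=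
  IsPolytope P ∧ ∀ v, IsVertexOf P v → ∀ i, (∃ z : ℤ, v i = (z : ℝ)) ∧ 0 ≤ v i ∧ v i ≤ (k : ℝ)

/-- The vector `x_σ` associated to a signed permutation `σ = (π, ε)` of `[n]` and
a real number `α`, with `(x_σ)_i = ε(i)·α^{π(i)}` where `π(i)` ranges over `{1,…,n}`. -/
def signedPermVec {n : ℕ} (π : Equiv.Perm (Fin n)) (ε : Fin n → ℝ) (α : ℝ) : Fin n → ℝ :=
  fun i => ε i * α ^ ((π i : ℕ) + 1)

noncomputable def dotpCLM {n : ℕ} (c : Fin n → ℝ) : (Fin n → ℝ) →L[ℝ] ℝ :=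
  LinearMap.toContinuousLinearMap (∑ i, c i • (LinearMap.proj i : (Fin n → ℝ) →ₗ[ℝ] ℝ))
theorem dotpCLM_apply {n : ℕ} (c x : Fin n → ℝ) : dotpCLM c x = dotp c x := by
  simp [dotpCLM, dotp, LinearMap.sum_apply, mul_comm]
theorem clm_eq_dotp {n : ℕ} (f : (Fin n → ℝ) →L[ℝ] ℝ) (x : Fin n → ℝ) :
    f x = dotp (fun i => f (Pi.single i (1:ℝ))) x := by
  have hx : x = ∑ i, x i • (Pi.single i 1 : Fin n → ℝ) := by
    ext j
    rw [Finset.sum_apply]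
    simp [Pi.single_apply, eq_comm]
  calc f x = f (∑ i, x i • (Pi.single i 1 : Fin n → ℝ)) := by rw [← hx]
    _ = ∑ i, x i • f (Pi.single i (1:ℝ) : Fin n → ℝ) := by rw [map_sum]; simp
    _ = dotp (fun i => f (Pi.single i (1:ℝ))) x := by
        simp [dotp, mul_comm, smul_eq_mul]
theorem dotp_isLinear {n : ℕ} (c : Fin n → ℝ) : IsLinearMap ℝ (dotp c) :=
  ⟨fun x y => by simp [dotp, mul_add, Finset.sum_add_distrib],
   fun r x => by simp only [dotp, smul_eq_mul, Pi.smul_apply, Finset.mul_sum]; exact Finset.sum_congr rfl fun i _ => by ring⟩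
theorem dotp_le_of_mem_convexHull {n : ℕ} {S : Set (Fin n → ℝ)} {c : Fin n → ℝ} {M : ℝ}
    (hS : ∀ s ∈ S, dotp c s ≤ M) {x : Fin n → ℝ} (hx : x ∈ convexHull ℝ S) :
    dotp c x ≤ M :=
  convexHull_min hS (convex_halfSpace_le (dotp_isLinear c) M) hx
theorem dotp_ge_of_mem_convexHull {n : ℕ} {S : Set (Fin n → ℝ)} {c : Fin n → ℝ} {M : ℝ}
    (hS : ∀ s ∈ S, M ≤ dotp c s) {x : Fin n → ℝ} (hx : x ∈ convexHull ℝ S) :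
    M ≤ dotp c x :=
  convexHull_min hS (convex_halfSpace_ge (dotp_isLinear c) M) hx

-- CHUNK 2
attribute [local instance] Classical.propDecidable

theorem dotp_add_right {n : ℕ} (c x y : Fin n → ℝ) : dotp c (x + y) = dotp c x + dotp c y :=
  (dotp_isLinear c).map_add x y
theorem dotp_smul_right {n : ℕ} (c : Fin n → ℝ) (r : ℝ) (x : Fin n → ℝ) :
    dotp c (r • x) = r * dotp c x := (dotp_isLinear c).map_smul r x
theorem dotp_sub_right {n : ℕ} (c x y : Fin n → ℝ) : dotp c (x - y) = dotp c x - dotp c y := by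
  have := dotp_add_right c (x - y) y; simp at this; linarith
theorem dotp_add_left {n : ℕ} (c d x : Fin n → ℝ) : dotp (c + d) x = dotp c x + dotp d x := by
  simp [dotp, add_mul, Finset.sum_add_distrib]
theorem dotp_smul_left {n : ℕ} (r : ℝ) (c x : Fin n → ℝ) : dotp (r • c) x = r * dotp c x := by
  simp only [dotp, Pi.smul_apply, smul_eq_mul, Finset.mul_sum]
  exact Finset.sum_congr rfl fun i _ => by ring

noncomputable def argmaxSet {n : ℕ} (S : Finset (Fin n → ℝ)) (c : Fin n → ℝ) :
    Finset (Fin n → ℝ) :=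
  S.filter (fun s => ∀ t ∈ S, dotp c t ≤ dotp c s)

theorem argmaxSet_subset {n : ℕ} (S : Finset (Fin n → ℝ)) (c : Fin n → ℝ) :
    argmaxSet S c ⊆ S := Finset.filter_subset _ _

theorem mem_argmaxSet {n : ℕ} {S : Finset (Fin n → ℝ)} {c s : Fin n → ℝ} :
    s ∈ argmaxSet S c ↔ s ∈ S ∧ ∀ t ∈ S, dotp c t ≤ dotp c s := Finset.mem_filter

theorem argmaxSet_nonempty {n : ℕ} {S : Finset (Fin n → ℝ)} (hS : S.Nonempty) (c : Fin n → ℝ) :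
    (argmaxSet S c).Nonempty := by
  obtain ⟨b, hb, hbmax⟩ := S.exists_max_image (dotp c) hS
  exact ⟨b, mem_argmaxSet.2 ⟨hb, hbmax⟩⟩

theorem argmaxSet_dotp_eq {n : ℕ} {S : Finset (Fin n → ℝ)} {c s t : Fin n → ℝ}
    (hs : s ∈ argmaxSet S c) (ht : t ∈ argmaxSet S c) : dotp c s = dotp c t :=
  le_antisymm ((mem_argmaxSet.1 ht).2 s (mem_argmaxSet.1 hs).1)
    ((mem_argmaxSet.1 hs).2 t (mem_argmaxSet.1 ht).1)

/-- The argmax face description of the exposed face. -/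
theorem face_eq_convexHull_argmaxSet {n : ℕ} (S : Finset (Fin n → ℝ)) (c : Fin n → ℝ)
    (hS : S.Nonempty) :
    {x ∈ convexHull ℝ (S : Set (Fin n → ℝ)) |
        ∀ y ∈ convexHull ℝ (S : Set (Fin n → ℝ)), dotp c y ≤ dotp c x}
      = convexHull ℝ ((argmaxSet S c : Finset (Fin n → ℝ)) : Set (Fin n → ℝ)) := by
  obtain ⟨t₀, ht₀⟩ := argmaxSet_nonempty hS c
  set M := dotp c t₀ with hM
  have hub : ∀ s ∈ (S : Set (Fin n → ℝ)), dotp c s ≤ M := fun s hs =>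
    (mem_argmaxSet.1 ht₀).2 s (Finset.mem_coe.1 hs)
  have hTv : ∀ s ∈ ((argmaxSet S c : Finset (Fin n → ℝ)) : Set (Fin n → ℝ)), M ≤ dotp c s :=
    fun s hs => le_of_eq (argmaxSet_dotp_eq ht₀ (Finset.mem_coe.1 hs))
  apply Set.Subset.antisymm
  · rintro x ⟨hxP, hxmax⟩
    have hxub : dotp c x ≤ M := dotp_le_of_mem_convexHull hub hxP
    have hxlb : M ≤ dotp c x := hxmax t₀ (subset_convexHull ℝ _ (Finset.mem_coe.2 (argmaxSet_subset S c ht₀)))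
    have hxM : dotp c x = M := le_antisymm hxub hxlb
    rw [Finset.convexHull_eq] at hxP
    obtain ⟨w, hw0, hw1, hwx⟩ := hxP
    have hxsum : x = ∑ s ∈ S, w s • s := by
      rw [← hwx, Finset.centerMass_eq_of_sum_1 _ _ hw1]; rfl
    have hdx : dotp c x = ∑ s ∈ S, w s * dotp c s := by
      rw [hxsum, ← dotpCLM_apply, map_sum]
      exact Finset.sum_congr rfl fun s _ => by rw [map_smul, dotpCLM_apply]; rfl
    have hzero : ∑ s ∈ S, w s * (M - dotp c s) = 0 := by
      have : ∑ s ∈ S, w s * M = M := by rw [← Finset.sum_mul, hw1, one_mul]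
      calc ∑ s ∈ S, w s * (M - dotp c s) = (∑ s ∈ S, w s * M) - ∑ s ∈ S, w s * dotp c s := by
            rw [← Finset.sum_sub_distrib]; exact Finset.sum_congr rfl fun s _ => by ring
        _ = M - dotp c x := by rw [this, hdx]
        _ = 0 := by rw [hxM]; ring
    have hall : ∀ s ∈ S, w s * (M - dotp c s) = 0 :=
      (Finset.sum_eq_zero_iff_of_nonneg (fun s hs =>
        mul_nonneg (hw0 s hs) (by linarith [hub s (Finset.mem_coe.2 hs)]))).1 hzero
    have hw0' : ∀ s ∈ S, s ∉ argmaxSet S c → w s = 0 := by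
      intro s hs hsT
      rcases mul_eq_zero.1 (hall s hs) with h | h
      · exact h
      · exfalso
        apply hsT
        refine mem_argmaxSet.2 ⟨hs, fun t ht => ?_⟩
        have : dotp c s = M := by linarith
        rw [this]; exact hub t (Finset.mem_coe.2 ht)
    have hsum1 : ∑ s ∈ argmaxSet S c, w s = 1 := by
      rw [← hw1]
      exact Finset.sum_subset (argmaxSet_subset S c) (fun s hs hns => hw0' s hs hns)
    have hxsum2 : x = ∑ s ∈ argmaxSet S c, w s • s := by
      rw [hxsum]
      exact (Finset.sum_subset (argmaxSet_subset S c)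
        (fun s hs hns => by rw [hw0' s hs hns, zero_smul])).symm
    have : (argmaxSet S c).centerMass w id = x := by
      rw [Finset.centerMass_eq_of_sum_1 _ _ hsum1, hxsum2]; rfl
    rw [← this]
    exact Finset.centerMass_mem_convexHull _ (fun s hs => hw0 s (argmaxSet_subset S c hs))
      (by rw [hsum1]; norm_num) (fun s hs => Finset.mem_coe.2 hs)
  · intro x hx
    have hxP : x ∈ convexHull ℝ (S : Set (Fin n → ℝ)) :=
      convexHull_mono (fun s hs => Finset.mem_coe.2 (argmaxSet_subset S c (Finset.mem_coe.1 hs))) hx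
    have hxM : M ≤ dotp c x := dotp_ge_of_mem_convexHull hTv hx
    exact ⟨hxP, fun y hy => le_trans (dotp_le_of_mem_convexHull hub hy) hxM⟩

theorem isExposed_argmaxSet {n : ℕ} (S : Finset (Fin n → ℝ)) (c : Fin n → ℝ) (hS : S.Nonempty) :
    IsExposed ℝ (convexHull ℝ (S : Set (Fin n → ℝ)))
      (convexHull ℝ ((argmaxSet S c : Finset (Fin n → ℝ)) : Set (Fin n → ℝ))) := by
  intro _
  refine ⟨dotpCLM c, ?_⟩
  rw [← face_eq_convexHull_argmaxSet S c hS]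
  ext x
  simp only [Set.mem_setOf_eq, dotpCLM_apply]

-- CHUNK 3
/-- Transitivity: an argmax face of an argmax face is an argmax face. -/
theorem argmaxSet_argmaxSet {n : ℕ} (S : Finset (Fin n → ℝ)) (hS : S.Nonempty)
    (c l : Fin n → ℝ) :
    ∃ c' : Fin n → ℝ, argmaxSet S c' = argmaxSet (argmaxSet S c) l := by
  set T := argmaxSet S c with hT
  obtain ⟨t₀, ht₀⟩ := argmaxSet_nonempty hS c
  obtain ⟨t₂, ht₂⟩ := argmaxSet_nonempty ⟨t₀, ht₀⟩ l
  set M1 := dotp c t₀ with hM1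
  set M2 := dotp l t₂ with hM2
  have ht₂T : t₂ ∈ T := argmaxSet_subset T l ht₂
  have hTval : ∀ s ∈ T, dotp c s = M1 := fun s hs => argmaxSet_dotp_eq hs ht₀
  have hTub : ∀ s ∈ S, dotp c s ≤ M1 := fun s hs => (mem_argmaxSet.1 ht₀).2 s hs
  have hT2val : ∀ s ∈ argmaxSet T l, dotp l s = M2 := fun s hs => argmaxSet_dotp_eq hs ht₂
  have hT2ub : ∀ s ∈ T, dotp l s ≤ M2 := fun s hs => (mem_argmaxSet.1 ht₂).2 s hs
  -- choose δ > 0 small enough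
  have hex : ∃ δ : ℝ, 0 < δ ∧ ∀ s ∈ S, s ∉ T → dotp c s + δ * dotp l s < M1 + δ * M2 := by
    by_cases hST : (S \ T).Nonempty
    · obtain ⟨sb, hsb, hsbmin⟩ := (S \ T).exists_min_image
        (fun s => (M1 - dotp c s) / (1 + |dotp l s - M2|)) hST
      set δ := (M1 - dotp c sb) / (1 + |dotp l sb - M2|) with hδdef
      have hstrict : ∀ s ∈ S, s ∉ T → dotp c s < M1 := by
        intro s hs hsT
        rcases lt_or_eq_of_le (hTub s hs) with h | h
        · exact h
        · exact absurd (mem_argmaxSet.2 ⟨hs, fun t ht => h ▸ hTub t ht⟩) hsT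
      have hpos : ∀ s ∈ S \ T, 0 < (M1 - dotp c s) / (1 + |dotp l s - M2|) := by
        intro s hs
        obtain ⟨hs1, hs2⟩ := Finset.mem_sdiff.1 hs
        have h1 : 0 < M1 - dotp c s := by linarith [hstrict s hs1 hs2]
        have h2 : (0:ℝ) < 1 + |dotp l s - M2| := by positivity
        positivity
      refine ⟨δ, hpos sb hsb, ?_⟩
      intro s hs hsT
      have hδle : δ ≤ (M1 - dotp c s) / (1 + |dotp l s - M2|) :=
        hsbmin s (Finset.mem_sdiff.2 ⟨hs, hsT⟩)
      have hg : 0 < M1 - dotp c s := by linarith [hstrict s hs hsT]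
      have hb : 0 ≤ |dotp l s - M2| := abs_nonneg _
      have hb1 : (0:ℝ) < 1 + |dotp l s - M2| := by linarith
      have hδ0 : 0 < δ := hpos sb hsb
      have key : δ * (dotp l s - M2) < M1 - dotp c s := by
        have h1 : δ * (dotp l s - M2) ≤ δ * |dotp l s - M2| :=
          mul_le_mul_of_nonneg_left (le_abs_self _) (le_of_lt hδ0)
        have h2 : δ * |dotp l s - M2| ≤
            (M1 - dotp c s) / (1 + |dotp l s - M2|) * |dotp l s - M2| :=
          mul_le_mul_of_nonneg_right hδle hb
        have h3 : (M1 - dotp c s) / (1 + |dotp l s - M2|) * |dotp l s - M2| < M1 - dotp c s := by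
          rw [div_mul_eq_mul_div, div_lt_iff₀ hb1]
          nlinarith
        linarith
      linarith
    · exact ⟨1, one_pos, fun s hs hsT => absurd (Finset.mem_sdiff.2 ⟨hs, hsT⟩)
        (fun h => hST ⟨s, h⟩)⟩
  obtain ⟨δ, hδ, hδs⟩ := hex
  refine ⟨c + δ • l, ?_⟩
  have hval : ∀ s, dotp (c + δ • l) s = dotp c s + δ * dotp l s := fun s => by
    rw [dotp_add_left, dotp_smul_left]
  have hub : ∀ s ∈ S, dotp (c + δ • l) s ≤ M1 + δ * M2 := by
    intro s hs
    rw [hval]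
    by_cases hsT : s ∈ T
    · have h1 := hTval s hsT
      have h2 := hT2ub s hsT
      nlinarith
    · exact le_of_lt (hδs s hs hsT)
  have hattain : dotp (c + δ • l) t₂ = M1 + δ * M2 := by
    rw [hval, hTval t₂ ht₂T, hT2val t₂ ht₂]
  ext s
  constructor
  · intro hs
    obtain ⟨hsS, hsmax⟩ := mem_argmaxSet.1 hs
    have hst₂ : dotp (c + δ • l) t₂ ≤ dotp (c + δ • l) s :=
      hsmax t₂ (argmaxSet_subset S c ht₂T)
    have hseq : dotp (c + δ • l) s = M1 + δ * M2 :=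
      le_antisymm (hub s hsS) (hattain ▸ hst₂)
    have hsT : s ∈ T := by
      by_contra hsT
      have := hδs s hsS hsT
      rw [hval] at hseq
      linarith
    have hlM2 : dotp l s = M2 := by
      have h1 := hTval s hsT
      rw [hval, h1] at hseq
      have : δ * dotp l s = δ * M2 := by linarith
      exact mul_left_cancel₀ (ne_of_gt hδ) this
    refine mem_argmaxSet.2 ⟨hsT, fun t ht => ?_⟩
    rw [hlM2]
    exact hT2ub t ht
  · intro hs
    obtain ⟨hsT, hsmax⟩ := mem_argmaxSet.1 hs
    have hsval : dotp (c + δ • l) s = M1 + δ * M2 := by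
      rw [hval, hTval s hsT, hT2val s hs]
    refine mem_argmaxSet.2 ⟨argmaxSet_subset S c hsT, fun t ht => ?_⟩
    rw [hsval]
    exact hub t ht

/-- Edges of an argmax face are edges of the polytope. -/
theorem isEdgeOf_of_isEdgeOf_argmaxFace {n : ℕ} (S : Finset (Fin n → ℝ)) (hS : S.Nonempty)
    (c : Fin n → ℝ) {u w : Fin n → ℝ}
    (h : IsEdgeOf (convexHull ℝ ((argmaxSet S c : Finset _) : Set (Fin n → ℝ))) u w) :
    IsEdgeOf (convexHull ℝ (S : Set (Fin n → ℝ))) u w := by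
  obtain ⟨hne, hu, hw, hexp⟩ := h
  set T := argmaxSet S c with hTdef
  have hTne : T.Nonempty := argmaxSet_nonempty hS c
  have hext : IsExtreme ℝ (convexHull ℝ (S : Set (Fin n → ℝ)))
      (convexHull ℝ (T : Set (Fin n → ℝ))) := (isExposed_argmaxSet S c hS).isExtreme
  refine ⟨hne, hext.extremePoints_subset_extremePoints hu,
    hext.extremePoints_subset_extremePoints hw, ?_⟩
  obtain ⟨l, hl⟩ := hexp ⟨u, left_mem_segment ℝ u w⟩
  set lv := fun i => l (Pi.single i (1:ℝ)) with hlv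
  have hlv' : ∀ x, l x = dotp lv x := fun x => clm_eq_dotp l x
  have hseg : segment ℝ u w = convexHull ℝ ((argmaxSet T lv : Finset _) : Set (Fin n → ℝ)) := by
    rw [hl, ← face_eq_convexHull_argmaxSet T lv hTne]
    ext x
    simp only [Set.mem_setOf_eq, hlv']
  obtain ⟨c', hc'⟩ := argmaxSet_argmaxSet S hS c lv
  have := isExposed_argmaxSet S c' hS
  rw [hc', ← hseg] at this
  exact this

/-- Edges of the polytope between points of an argmax face are edges of the face. -/
theorem isEdgeOf_argmaxFace_of_isEdgeOf {n : ℕ} (S : Finset (Fin n → ℝ))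
    (c : Fin n → ℝ) {u w : Fin n → ℝ}
    (hu : u ∈ convexHull ℝ ((argmaxSet S c : Finset _) : Set (Fin n → ℝ)))
    (hw : w ∈ convexHull ℝ ((argmaxSet S c : Finset _) : Set (Fin n → ℝ)))
    (h : IsEdgeOf (convexHull ℝ (S : Set (Fin n → ℝ))) u w) :
    IsEdgeOf (convexHull ℝ ((argmaxSet S c : Finset _) : Set (Fin n → ℝ))) u w := by
  obtain ⟨hne, hvu, hvw, hexp⟩ := h
  have hFP : convexHull ℝ ((argmaxSet S c : Finset _) : Set (Fin n → ℝ))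
      ⊆ convexHull ℝ (S : Set (Fin n → ℝ)) :=
    convexHull_mono (fun s hs => Finset.mem_coe.2 (argmaxSet_subset S c (Finset.mem_coe.1 hs)))
  have hsegsub : segment ℝ u w ⊆ convexHull ℝ ((argmaxSet S c : Finset _) : Set (Fin n → ℝ)) :=
    (convex_convexHull ℝ _).segment_subset hu hw
  refine ⟨hne, ?_, ?_, hexp.mono hFP hsegsub⟩
  · exact inter_extremePoints_subset_extremePoints_of_subset hFP ⟨hu, hvu⟩
  · exact inter_extremePoints_subset_extremePoints_of_subset hFP ⟨hw, hvw⟩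

-- CHUNK 4: local to global
theorem exists_pos_forall_lt {β : Type*} (T : Finset β) (g b : β → ℝ)
    (hg : ∀ s ∈ T, 0 < g s) : ∃ ε : ℝ, 0 < ε ∧ ∀ s ∈ T, ε * b s < g s := by
  rcases T.eq_empty_or_nonempty with he | hne
  · exact ⟨1, one_pos, fun s hs => by simp [he] at hs⟩
  · obtain ⟨sb, hsb, hsbmin⟩ := T.exists_min_image (fun s => g s / (1 + |b s|)) hne
    have hpos : ∀ s ∈ T, 0 < g s / (1 + |b s|) := by
      intro s hs
      have h1 := hg s hs
      have h2 : (0:ℝ) < 1 + |b s| := by positivity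
      positivity
    refine ⟨g sb / (1 + |b sb|), hpos sb hsb, fun s hs => ?_⟩
    have hεle : g sb / (1 + |b sb|) ≤ g s / (1 + |b s|) := hsbmin s hs
    have hb : 0 ≤ |b s| := abs_nonneg _
    have hb1 : (0:ℝ) < 1 + |b s| := by linarith
    have hε0 : 0 < g sb / (1 + |b sb|) := hpos sb hsb
    have h1 : g sb / (1 + |b sb|) * b s ≤ g sb / (1 + |b sb|) * |b s| :=
      mul_le_mul_of_nonneg_left (le_abs_self _) (le_of_lt hε0)
    have h2 : g sb / (1 + |b sb|) * |b s| ≤ g s / (1 + |b s|) * |b s| :=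
      mul_le_mul_of_nonneg_right hεle hb
    have h3 : g s / (1 + |b s|) * |b s| < g s := by
      rw [div_mul_eq_mul_div, div_lt_iff₀ hb1]
      nlinarith [hg s hs]
    linarith

theorem dotp_self_pos {n : ℕ} {z : Fin n → ℝ} (hz : z ≠ 0) : 0 < dotp z z := by
  obtain ⟨i, hi⟩ := Function.ne_iff.1 hz
  have : (0:ℝ) < z i * z i := mul_self_pos.2 (by simpa using hi)
  refine Finset.sum_pos' (fun j _ => mul_self_nonneg (z j)) ⟨i, Finset.mem_univ i, this⟩

theorem cone_avoid {n : ℕ} (S : Finset (Fin n → ℝ)) (v : Fin n → ℝ) {z f₁ : Fin n → ℝ}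
    (hz : z ≠ 0) (hf₁ : ∀ s ∈ S, s ≠ v → dotp f₁ s < dotp f₁ v) :
    ∃ f : Fin n → ℝ, (∀ s ∈ S, s ≠ v → dotp f s < dotp f v) ∧ dotp f z ≠ 0 := by
  by_cases h0 : dotp f₁ z = 0
  · obtain ⟨ε, hε, hεs⟩ := exists_pos_forall_lt (S.filter (fun s => s ≠ v))
      (fun s => dotp f₁ v - dotp f₁ s) (fun s => dotp z s - dotp z v)
      (fun s hs => by
        obtain ⟨hs1, hs2⟩ := Finset.mem_filter.1 hs
        show (0:ℝ) < dotp f₁ v - dotp f₁ s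
        linarith [hf₁ s hs1 hs2])
    refine ⟨f₁ + ε • z, fun s hs hsv => ?_, ?_⟩
    · have h2 : ε * (dotp z s - dotp z v) < dotp f₁ v - dotp f₁ s :=
        hεs s (Finset.mem_filter.2 ⟨hs, hsv⟩)
      rw [dotp_add_left, dotp_add_left, dotp_smul_left, dotp_smul_left]
      nlinarith [h2]
    · rw [dotp_add_left, dotp_smul_left, h0]
      have hzz := dotp_self_pos hz
      have hdzz : dotp z z = dotp z z := rfl
      positivity
  · exact ⟨f₁, hf₁, h0⟩

theorem faceStep {n : ℕ} (S : Finset (Fin n → ℝ)) {v c f : Fin n → ℝ}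
    (hvS : v ∈ S)
    (hsep : ∀ s ∈ S, s ≠ v → dotp f s < dotp f v)
    (hA : ∃ s ∈ S, dotp c v < dotp c s) :
    ∃ (h : Fin n → ℝ) (t : ℝ), 0 < t ∧ v ∈ argmaxSet S h ∧
      (∃ s₀ ∈ argmaxSet S h, dotp c v < dotp c s₀) ∧
      (∀ s ∈ argmaxSet S h, dotp c s - dotp c v = t * (dotp f v - dotp f s)) := by
  classical
  set A := S.filter (fun s => dotp c v < dotp c s) with hAdef
  have hAne : A.Nonempty := by
    obtain ⟨s, hs, hcs⟩ := hA
    exact ⟨s, Finset.mem_filter.2 ⟨hs, hcs⟩⟩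
  have hAS : A ⊆ S := Finset.filter_subset _ _
  have hAv : ∀ s ∈ A, s ≠ v := by
    intro s hs
    have := (Finset.mem_filter.1 hs).2
    intro h; rw [h] at this; exact lt_irrefl _ this
  have hAgap : ∀ s ∈ A, 0 < dotp f v - dotp f s := fun s hs => by
    linarith [hsep s (hAS hs) (hAv s hs)]
  set r := fun s => (dotp c s - dotp c v) / (dotp f v - dotp f s) with hrdef
  obtain ⟨s₀, hs₀A, hs₀max⟩ := A.exists_max_image r hAne
  set t := r s₀ with htdef
  have ht : 0 < t := by
    have h1 := (Finset.mem_filter.1 hs₀A).2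
    have h2 := hAgap s₀ hs₀A
    have : 0 < dotp c s₀ - dotp c v := by linarith
    exact div_pos this h2
  have hcancel : ∀ s ∈ A, dotp c s - dotp c v = r s * (dotp f v - dotp f s) := fun s hs =>
    (div_mul_cancel₀ _ (ne_of_gt (hAgap s hs))).symm
  set h := c + t • f with hhdef
  have hval : ∀ s, dotp h s = dotp c s + t * dotp f s := fun s => by
    rw [hhdef, dotp_add_left, dotp_smul_left]
  have hub : ∀ s ∈ S, dotp h s ≤ dotp h v := by
    intro s hs
    rw [hval, hval]
    by_cases hsv : s = v
    · rw [hsv]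
    by_cases hsA : s ∈ A
    · have h1 := hcancel s hsA
      have h2 := hs₀max s hsA
      have h3 := hAgap s hsA
      nlinarith
    · have h1 : dotp c s ≤ dotp c v := by
        by_contra hcon
        exact hsA (Finset.mem_filter.2 ⟨hs, by linarith⟩)
      have h2 := hsep s hs hsv
      nlinarith
  have hvT : v ∈ argmaxSet S h := mem_argmaxSet.2 ⟨hvS, fun s hs => hub s hs⟩
  have hs₀eq : dotp h s₀ = dotp h v := by
    rw [hval, hval]
    have h1 := hcancel s₀ hs₀A
    nlinarith
  refine ⟨h, t, ht, hvT, ⟨s₀, mem_argmaxSet.2 ⟨hAS hs₀A, fun s hs => by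
      rw [hs₀eq]; exact hub s hs⟩, (Finset.mem_filter.1 hs₀A).2⟩, ?_⟩
  intro s hs
  have heq : dotp h s = dotp h v :=
    le_antisymm (hub s (mem_argmaxSet.1 hs).1) ((mem_argmaxSet.1 hs).2 v hvS)
  rw [hval, hval] at heq
  nlinarith [heq]

/-- From any vertex that does not maximize `c`, there is a `c`-improving neighbor. -/
theorem improving_neighbor {n : ℕ} :
    ∀ (N : ℕ) (S : Finset (Fin n → ℝ)) (c v : Fin n → ℝ),
    S.card ≤ N →
    v ∈ Set.extremePoints ℝ (convexHull ℝ (S : Set (Fin n → ℝ))) →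
    (∃ x ∈ convexHull ℝ (S : Set (Fin n → ℝ)), dotp c v < dotp c x) →
    ∃ w, IsEdgeOf (convexHull ℝ (S : Set (Fin n → ℝ))) v w ∧ dotp c v < dotp c w := by
  intro N
  induction N with
  | zero =>
    intro S c v hcard hv _
    rw [Finset.card_eq_zero.1 (Nat.le_zero.1 hcard)] at hv
    simp at hv
  | succ N IH =>
    intro S c v hcard hv hx
    have hvP : v ∈ convexHull ℝ (S : Set (Fin n → ℝ)) := extremePoints_subset hv
    have hvS : v ∈ S := Finset.mem_coe.1 (extremePoints_convexHull_subset hv)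
    have hSne : S.Nonempty := ⟨v, hvS⟩
    have hA : ∃ s ∈ S, dotp c v < dotp c s := by
      by_contra hcon
      push_neg at hcon
      obtain ⟨x, hxP, hxc⟩ := hx
      have := dotp_le_of_mem_convexHull
        (fun s hs => hcon s (Finset.mem_coe.1 hs)) hxP
      linarith
    -- recursion step
    have key : ∀ h : Fin n → ℝ, v ∈ argmaxSet S h →
        (∃ s₀ ∈ argmaxSet S h, dotp c v < dotp c s₀) → argmaxSet S h ≠ S →
        ∃ w, IsEdgeOf (convexHull ℝ (S : Set (Fin n → ℝ))) v w ∧ dotp c v < dotp c w := by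
      intro h hvT hs₀ hTS
      have hTsub := argmaxSet_subset S h
      have hcard' : (argmaxSet S h).card ≤ N := by
        have : (argmaxSet S h).card < S.card :=
          Finset.card_lt_card (ssubset_of_subset_of_ne hTsub hTS)
        omega
      have hFP : convexHull ℝ ((argmaxSet S h : Finset _) : Set (Fin n → ℝ))
          ⊆ convexHull ℝ (S : Set (Fin n → ℝ)) :=
        convexHull_mono (fun s hs => Finset.mem_coe.2 (hTsub (Finset.mem_coe.1 hs)))
      have hvF : v ∈ Set.extremePoints ℝ
          (convexHull ℝ ((argmaxSet S h : Finset _) : Set (Fin n → ℝ))) :=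
        inter_extremePoints_subset_extremePoints_of_subset hFP
          ⟨subset_convexHull ℝ _ (Finset.mem_coe.2 hvT), hv⟩
      obtain ⟨s₀, hs₀T, hs₀c⟩ := hs₀
      obtain ⟨w, hw, hwc⟩ := IH (argmaxSet S h) c v hcard' hvF
        ⟨s₀, subset_convexHull ℝ _ (Finset.mem_coe.2 hs₀T), hs₀c⟩
      exact ⟨w, isEdgeOf_of_isEdgeOf_argmaxFace S hSne h hw, hwc⟩
    -- separation
    have hsep0 : ∃ f : Fin n → ℝ, ∀ s ∈ S, s ≠ v → dotp f s < dotp f v := by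
      rcases (S.erase v).eq_empty_or_nonempty with he | hne
      · refine ⟨0, fun s hs hsv => absurd (Finset.mem_erase.2 ⟨hsv, hs⟩) ?_⟩
        rw [he]; exact Finset.notMem_empty s
      · have hvnot : v ∉ convexHull ℝ ((S.erase v : Finset _) : Set (Fin n → ℝ)) := by
          have h1 := (convex_convexHull ℝ (S : Set (Fin n → ℝ))).mem_extremePoints_iff_mem_diff_convexHull_diff.1 hv
          intro hcon
          apply h1.2
          refine convexHull_mono ?_ hcon
          intro s hs
          obtain ⟨hs1, hs2⟩ := Finset.mem_erase.1 (Finset.mem_coe.1 hs)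
          exact ⟨subset_convexHull ℝ _ (Finset.mem_coe.2 hs2), hs1⟩
        obtain ⟨f, u, hfs, hfv⟩ := geometric_hahn_banach_closed_point
          (convex_convexHull ℝ _) ((S.erase v).finite_toSet.isClosed_convexHull ℝ) hvnot
        refine ⟨fun i => f (Pi.single i 1), fun s hs hsv => ?_⟩
        rw [← clm_eq_dotp f s, ← clm_eq_dotp f v]
        have hs' : s ∈ convexHull ℝ ((S.erase v : Finset _) : Set (Fin n → ℝ)) :=
          subset_convexHull ℝ _ (Finset.mem_coe.2 (Finset.mem_erase.2 ⟨hsv, hs⟩))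
        exact lt_trans (hfs s hs') hfv
    obtain ⟨f₁, hf₁⟩ := hsep0
    by_cases hAS : ∀ s ∈ S, s ≠ v → dotp c v < dotp c s
    · by_cases hcol : ∀ s₁ ∈ S, ∀ s₂ ∈ S,
          (dotp c s₂ - dotp c v) • (v - s₁) = (dotp c s₁ - dotp c v) • (v - s₂)
      · -- collinear case : P is the segment [v, sm]
        obtain ⟨sm, hsmS, hsmmax⟩ := S.exists_max_image (dotp c) hSne
        have hsmv : dotp c v < dotp c sm := by
          obtain ⟨s, hs, hcs⟩ := hA
          exact lt_of_lt_of_le hcs (hsmmax s hs)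
        have hsmne : sm ≠ v := fun h => by rw [h] at hsmv; exact lt_irrefl _ hsmv
        set astar := dotp c sm - dotp c v with hastar
        have hastar0 : 0 < astar := by linarith
        have hseg : (S : Set (Fin n → ℝ)) ⊆ segment ℝ v sm := by
          intro s hs
          have hsS := Finset.mem_coe.1 hs
          by_cases hsv : s = v
          · rw [hsv]; exact left_mem_segment ℝ v sm
          · have has : 0 < dotp c s - dotp c v := by linarith [hAS s hsS hsv]
            have hcol' := hcol s hsS sm hsmS
            set θ := (dotp c s - dotp c v) / astar with hθ
            have hθ0 : 0 < θ := div_pos has hastar0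
            have hθ1 : θ ≤ 1 := by
              rw [div_le_one hastar0]
              linarith [hsmmax s hsS]
            refine ⟨1 - θ, θ, by linarith, le_of_lt hθ0, by ring, ?_⟩
            funext i
            have hci := congrFun hcol' i
            simp only [Pi.smul_apply, Pi.sub_apply, smul_eq_mul] at hci
            simp only [Pi.add_apply, Pi.smul_apply, smul_eq_mul]
            have : astar * (v i - s i) = (dotp c s - dotp c v) * (v i - sm i) := by
              rw [hastar]; linarith [hci]
            have hθa : θ * astar = dotp c s - dotp c v := div_mul_cancel₀ _ (ne_of_gt hastar0)
            apply mul_left_cancel₀ (ne_of_gt hastar0)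
            linear_combination this - (v i - sm i) * hθa
        have hPseg : convexHull ℝ (S : Set (Fin n → ℝ)) = segment ℝ v sm := by
          apply Set.Subset.antisymm
          · exact convexHull_min hseg (convex_segment v sm)
          · rw [← convexHull_pair]
            exact convexHull_mono (by
              intro x hx
              rcases hx with h | h
              · rw [h]; exact Finset.mem_coe.2 hvS
              · rw [h]; exact Finset.mem_coe.2 hsmS)
        have hTsm : argmaxSet S c = {sm} := by
          ext s
          constructor
          · intro hs
            obtain ⟨hsS, hsmax'⟩ := mem_argmaxSet.1 hs
            have hval : dotp c s = dotp c sm :=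
              le_antisymm (hsmmax s hsS) (hsmax' sm hsmS)
            by_cases hsv : s = v
            · exfalso; rw [hsv] at hval; linarith
            · have hcol' := hcol s hsS sm hsmS
              have hss : dotp c s - dotp c v = astar := by rw [hastar, hval]
              rw [Finset.mem_singleton]
              funext i
              have hci := congrFun hcol' i
              simp only [Pi.smul_apply, Pi.sub_apply, smul_eq_mul, hss] at hci
              rw [← hastar] at hci
              have h2 : v i - s i = v i - sm i :=
                mul_left_cancel₀ (ne_of_gt hastar0) hci
              linarith
          · intro hs
            rw [Finset.mem_singleton] at hs
            rw [hs]
            exact mem_argmaxSet.2 ⟨hsmS, hsmmax⟩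
        have hsmext : sm ∈ Set.extremePoints ℝ (convexHull ℝ (S : Set (Fin n → ℝ))) := by
          have := isExposed_argmaxSet S c hSne
          rw [hTsm] at this
          simp only [Finset.coe_singleton, convexHull_singleton] at this
          exact isExtreme_singleton.1 this.isExtreme
        refine ⟨sm, ⟨fun h => hsmne h.symm, hv, hsmext, ?_⟩, hsmv⟩
        rw [hPseg]
      · push_neg at hcol
        obtain ⟨s₁, hs₁S, s₂, hs₂S, hz⟩ := hcol
        set z := (dotp c s₂ - dotp c v) • (v - s₁) - (dotp c s₁ - dotp c v) • (v - s₂)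
          with hzdef
        have hzne : z ≠ 0 := sub_ne_zero.2 hz
        obtain ⟨f, hfcone, hfz⟩ := cone_avoid S v hzne hf₁
        obtain ⟨h, t, ht, hvT, himp, hchar⟩ := faceStep S hvS hfcone hA
        apply key h hvT himp
        intro hTS
        apply hfz
        have h₁ : s₁ ∈ argmaxSet S h := by rw [hTS]; exact hs₁S
        have h₂ : s₂ ∈ argmaxSet S h := by rw [hTS]; exact hs₂S
        have e₁ := hchar s₁ h₁
        have e₂ := hchar s₂ h₂
        have hdz : dotp f z = (dotp c s₂ - dotp c v) * (dotp f v - dotp f s₁)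
            - (dotp c s₁ - dotp c v) * (dotp f v - dotp f s₂) := by
          rw [hzdef, dotp_sub_right, dotp_smul_right, dotp_smul_right,
            dotp_sub_right, dotp_sub_right]
        rw [hdz, e₁, e₂]
        ring
    · push_neg at hAS
      obtain ⟨s₁, hs₁S, hs₁v, hs₁c⟩ := hAS
      obtain ⟨h, t, ht, hvT, himp, hchar⟩ := faceStep S hvS hf₁ hA
      apply key h hvT himp
      intro hTS
      have h₁ : s₁ ∈ argmaxSet S h := by rw [hTS]; exact hs₁S
      have e₁ := hchar s₁ h₁
      have := hf₁ s₁ hs₁S hs₁v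
      nlinarith

-- CHUNK 5 : lexicographic lemmas
theorem geom_bound {k : ℕ} {α : ℝ} (hk1 : (k:ℝ) + 1 ≤ α) :
    ∀ N : ℕ, (k:ℝ) * ∑ t ∈ Finset.range N, α ^ (t+1) < α ^ (N+1) := by
  have hk0 : (0:ℝ) ≤ k := Nat.cast_nonneg k
  have h1 : (1:ℝ) ≤ α := by linarith
  have h0 : (0:ℝ) < α := lt_of_lt_of_le one_pos h1
  intro N
  induction N with
  | zero => simpa using (by positivity : (0:ℝ) < α ^ 1)
  | succ N ih =>
    rw [Finset.sum_range_succ, mul_add]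
    have hpow : (0:ℝ) < α ^ (N+1) := by positivity
    have : (k:ℝ) * ∑ t ∈ Finset.range N, α ^ (t+1) + (k:ℝ) * α ^ (N+1)
        < ((k:ℝ) + 1) * α ^ (N+1) := by nlinarith
    calc (k:ℝ) * ∑ t ∈ Finset.range N, α ^ (t+1) + (k:ℝ) * α ^ (N+1)
        < ((k:ℝ) + 1) * α ^ (N+1) := this
      _ ≤ α * α ^ (N+1) := by nlinarith
      _ = α ^ (N+1+1) := by ring

theorem lex_dominance {n k : ℕ} (π : Equiv.Perm (Fin n)) (ε : Fin n → ℝ)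
    (hε : ∀ i, ε i = 1 ∨ ε i = -1) {α : ℝ} (hα : 2*(k:ℝ)+1 ≤ α)
    {u w : Fin n → ℝ}
    (hu : ∀ i, 0 ≤ u i ∧ u i ≤ (k:ℝ))
    (hw : ∀ i, 0 ≤ w i ∧ w i ≤ (k:ℝ))
    (T : Fin n)
    (hhi : ∀ j, (π T : ℕ) < (π j : ℕ) → u j = w j)
    (hT : ε T * w T + 1 ≤ ε T * u T) :
    dotp (signedPermVec π ε α) w < dotp (signedPermVec π ε α) u := by
  have hk0 : (0:ℝ) ≤ k := Nat.cast_nonneg k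
  have hk1 : (k:ℝ) + 1 ≤ α := by linarith
  have h1 : (1:ℝ) ≤ α := by linarith
  have h0 : (0:ℝ) < α := by linarith
  set N := (π T : ℕ) with hN
  set f : Fin n → ℝ := fun j => ε j * α ^ ((π j : ℕ) + 1) * (u j - w j) with hf
  have hdiff : dotp (signedPermVec π ε α) u - dotp (signedPermVec π ε α) w
      = ∑ j, f j := by
    rw [dotp, dotp, ← Finset.sum_sub_distrib]
    exact Finset.sum_congr rfl fun j _ => by rw [hf]; simp [signedPermVec]; ring
  have hsplit : ∑ j, f j = f T + ∑ j ∈ Finset.univ.erase T, f j :=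
    (Finset.add_sum_erase _ f (Finset.mem_univ T)).symm
  have hmain : α ^ (N+1) ≤ f T := by
    have hpow : (0:ℝ) < α ^ (N+1) := by positivity
    have h2 : 1 ≤ ε T * u T - ε T * w T := by linarith
    have : f T = α ^ (N+1) * (ε T * u T - ε T * w T) := by rw [hf]; ring
    rw [this]
    nlinarith
  set g : Fin n → ℝ := fun j => if (π j : ℕ) < N then -((k:ℝ) * α ^ ((π j : ℕ) + 1)) else 0
    with hg
  have habs : ∀ j, |ε j * (u j - w j)| ≤ (k:ℝ) := by
    intro j
    have h2 := hu j; have h3 := hw j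
    rcases hε j with h | h <;> rw [h] <;> rw [abs_le] <;> constructor <;> nlinarith
  have hterm : ∀ j ∈ Finset.univ.erase T, g j ≤ f j := by
    intro j hj
    have hjT : j ≠ T := (Finset.mem_erase.1 hj).1
    have hπ : (π j : ℕ) ≠ N := by
      rw [hN]
      intro hc
      exact hjT (π.injective (Fin.val_injective hc))
    simp only [hf, hg]
    by_cases hlt : (π j : ℕ) < N
    · simp only [if_pos hlt]
      have hpow : (0:ℝ) < α ^ ((π j : ℕ) + 1) := by positivity
      have h2 : -(k:ℝ) ≤ ε j * (u j - w j) := by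
        have := habs j
        rw [abs_le] at this
        linarith [this.1]
      nlinarith
    · have hgt : N < (π j : ℕ) := by omega
      simp only [if_neg hlt, hhi j hgt]
      simp
  have hgsum : ∑ j ∈ Finset.univ.erase T, g j
      ≥ -((k:ℝ) * ∑ t ∈ Finset.range N, α ^ (t+1)) := by
    have he : ∑ j ∈ Finset.univ.erase T, g j
        = ∑ j ∈ (Finset.univ.erase T).filter (fun j => (π j : ℕ) < N),
            -((k:ℝ) * α ^ ((π j : ℕ) + 1)) := by
      rw [Finset.sum_filter]
    rw [he]
    have himg : ∑ j ∈ (Finset.univ.erase T).filter (fun j => (π j : ℕ) < N),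
        (k:ℝ) * α ^ ((π j : ℕ) + 1)
        ≤ (k:ℝ) * ∑ t ∈ Finset.range N, α ^ (t+1) := by
      rw [Finset.mul_sum]
      set A := (Finset.univ.erase T).filter (fun j => (π j : ℕ) < N) with hA
      have hinj : Set.InjOn (fun j => (π j : ℕ)) A := fun a _ b _ hab =>
        π.injective (Fin.val_injective hab)
      have himage : ∑ t ∈ A.image (fun j => (π j : ℕ)), ((k:ℝ) * α ^ (t + 1))
          = ∑ j ∈ A, (k:ℝ) * α ^ ((π j : ℕ) + 1) :=
        Finset.sum_image (fun a ha b hb hab => hinj ha hb hab)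
      rw [← himage]
      apply Finset.sum_le_sum_of_subset_of_nonneg
      · intro t ht
        obtain ⟨j, hj, rfl⟩ := Finset.mem_image.1 ht
        exact Finset.mem_range.2 ((Finset.mem_filter.1 hj).2)
      · intro t _ _
        positivity
    rw [Finset.sum_neg_distrib]
    exact neg_le_neg himg
  have hbound := geom_bound hk1 N
  have hfge : ∑ j ∈ Finset.univ.erase T, g j ≤ ∑ j ∈ Finset.univ.erase T, f j :=
    Finset.sum_le_sum hterm
  have : 0 < dotp (signedPermVec π ε α) u - dotp (signedPermVec π ε α) w := by
    rw [hdiff, hsplit]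
    linarith
  linarith

-- CHUNK 6
theorem lex_ne {n k : ℕ} (π : Equiv.Perm (Fin n)) (ε : Fin n → ℝ)
    (hε : ∀ i, ε i = 1 ∨ ε i = -1) {α : ℝ} (hα : 2*(k:ℝ)+1 ≤ α)
    {u w : Fin n → ℝ}
    (hu : ∀ i, (∃ z : ℤ, u i = (z:ℝ)) ∧ 0 ≤ u i ∧ u i ≤ (k:ℝ))
    (hw : ∀ i, (∃ z : ℤ, w i = (z:ℝ)) ∧ 0 ≤ w i ∧ w i ≤ (k:ℝ))
    (hne : u ≠ w) :
    dotp (signedPermVec π ε α) u ≠ dotp (signedPermVec π ε α) w := by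
  classical
  set D := Finset.univ.filter (fun j : Fin n => u j ≠ w j) with hD
  have hDne : D.Nonempty := by
    obtain ⟨j, hj⟩ := Function.ne_iff.1 hne
    exact ⟨j, Finset.mem_filter.2 ⟨Finset.mem_univ j, hj⟩⟩
  obtain ⟨T, hTD, hTmax⟩ := D.exists_max_image (fun j => (π j : ℕ)) hDne
  have hhi : ∀ j, (π T : ℕ) < (π j : ℕ) → u j = w j := by
    intro j hj
    by_contra hc
    have := hTmax j (Finset.mem_filter.2 ⟨Finset.mem_univ j, hc⟩)
    omega
  have hhi' : ∀ j, (π T : ℕ) < (π j : ℕ) → w j = u j := fun j hj => (hhi j hj).symm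
  have hTne : u T ≠ w T := (Finset.mem_filter.1 hTD).2
  obtain ⟨zu, hzu⟩ := (hu T).1
  obtain ⟨zw, hzw⟩ := (hw T).1
  have hzne : zu ≠ zw := by
    intro h; apply hTne; rw [hzu, hzw, h]
  have hdiff : u T - w T ≥ 1 ∨ w T - u T ≥ 1 := by
    rcases lt_or_gt_of_ne hzne with h | h
    · right
      have h3 : zu + 1 ≤ zw := h
      have h4 : (zu:ℝ) + 1 ≤ (zw:ℝ) := by exact_mod_cast h3
      rw [hzu, hzw]; linarith
    · left
      have h3 : zw + 1 ≤ zu := h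
      have h4 : (zw:ℝ) + 1 ≤ (zu:ℝ) := by exact_mod_cast h3
      rw [hzu, hzw]; linarith
  have hd : ε T * w T + 1 ≤ ε T * u T ∨ ε T * u T + 1 ≤ ε T * w T := by
    rcases hε T with h | h <;> rcases hdiff with h2 | h2 <;>
      [left; right; right; left] <;> rw [h] <;> linarith
  rcases hd with h | h
  · exact (lex_dominance π ε hε hα (fun i => (hu i).2) (fun i => (hw i).2) T hhi h).ne'
  · exact (lex_dominance π ε hε hα (fun i => (hw i).2) (fun i => (hu i).2) T hhi' h).ne

theorem one_le_polytopeDim {n : ℕ} {P : Set (Fin n → ℝ)} {u w : Fin n → ℝ}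
    (hu : u ∈ P) (hw : w ∈ P) (hne : u ≠ w) : 1 ≤ polytopeDim P := by
  rw [polytopeDim]
  by_contra hc
  push_neg at hc
  have h0 : Module.finrank ℝ (affineSpan ℝ P).direction = 0 := by omega
  have hbot : (affineSpan ℝ P).direction = ⊥ := Submodule.finrank_eq_zero.1 h0
  have hmem : w -ᵥ u ∈ (affineSpan ℝ P).direction :=
    AffineSubspace.vsub_mem_direction (mem_affineSpan ℝ hw) (mem_affineSpan ℝ hu)
  rw [hbot, Submodule.mem_bot] at hmem
  apply hne
  have : w - u = 0 := hmem
  funext i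
  have := congrFun this i
  simp only [Pi.sub_apply, Pi.zero_apply] at this
  linarith [this]

theorem polytopeDim_argmaxFace_lt {n : ℕ} (S : Finset (Fin n → ℝ)) (hS : S.Nonempty)
    (c : Fin n → ℝ) (hnc : ∃ s ∈ S, ∃ t ∈ S, dotp c s ≠ dotp c t) :
    polytopeDim (convexHull ℝ ((argmaxSet S c : Finset _) : Set (Fin n → ℝ)))
      < polytopeDim (convexHull ℝ (S : Set (Fin n → ℝ))) := by
  classical
  obtain ⟨t₀, ht₀⟩ := argmaxSet_nonempty hS c
  set M := dotp c t₀ with hM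
  set F := convexHull ℝ ((argmaxSet S c : Finset _) : Set (Fin n → ℝ)) with hF
  set P := convexHull ℝ (S : Set (Fin n → ℝ)) with hP
  have hub : ∀ s ∈ S, dotp c s ≤ M := fun s hs => (mem_argmaxSet.1 ht₀).2 s hs
  have hFval : ∀ x ∈ F, dotp c x = M := by
    intro x hx
    refine le_antisymm ?_ ?_
    · exact dotp_le_of_mem_convexHull
        (fun s hs => hub s (argmaxSet_subset S c (Finset.mem_coe.1 hs))) hx
    · exact dotp_ge_of_mem_convexHull
        (fun s hs => le_of_eq (argmaxSet_dotp_eq ht₀ (Finset.mem_coe.1 hs))) hx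
  have hFP : F ⊆ P := convexHull_mono
    (fun s hs => Finset.mem_coe.2 (argmaxSet_subset S c (Finset.mem_coe.1 hs)))
  obtain ⟨s, hsS, t, htS, hst⟩ := hnc
  have hx₀ : ∃ x₀ ∈ P, dotp c x₀ ≠ M := by
    by_cases hsM : dotp c s = M
    · exact ⟨t, subset_convexHull ℝ _ (Finset.mem_coe.2 htS), by rw [← hsM]; exact fun h => hst h.symm⟩
    · exact ⟨s, subset_convexHull ℝ _ (Finset.mem_coe.2 hsS), hsM⟩
  obtain ⟨x₀, hx₀P, hx₀M⟩ := hx₀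
  -- the affine hyperplane {x | dotp c x = M}
  set Q : AffineSubspace ℝ (Fin n → ℝ) :=
    AffineSubspace.comap ((dotp_isLinear c).mk' (dotp c)).toAffineMap
      (AffineSubspace.mk' (M:ℝ) ⊥) with hQ
  have hQmem : ∀ x, x ∈ Q ↔ dotp c x = M := by
    intro x
    rw [hQ, AffineSubspace.mem_comap, AffineSubspace.mem_mk']
    simp only [Submodule.mem_bot, vsub_eq_sub, sub_eq_zero]
    constructor
    · intro h; exact h
    · intro h; exact h
  have haff : affineSpan ℝ F ≤ Q := by
    rw [affineSpan_le]
    intro x hx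
    exact (hQmem x).2 (hFval x hx)
  have hle : affineSpan ℝ F ≤ affineSpan ℝ P := affineSpan_mono ℝ hFP
  have hdirle : (affineSpan ℝ F).direction ≤ (affineSpan ℝ P).direction :=
    AffineSubspace.direction_le hle
  by_contra hcon
  push_neg at hcon
  rw [polytopeDim, polytopeDim] at hcon
  have hdireq : (affineSpan ℝ F).direction = (affineSpan ℝ P).direction :=
    Submodule.eq_of_le_of_finrank_le hdirle hcon
  have ht₀F : t₀ ∈ F := subset_convexHull ℝ _ (Finset.mem_coe.2 ht₀)
  have hspaneq : affineSpan ℝ F = affineSpan ℝ P := by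
    apply AffineSubspace.ext_of_direction_eq hdireq
    exact ⟨t₀, Set.mem_inter (mem_affineSpan ℝ ht₀F) (mem_affineSpan ℝ (hFP ht₀F))⟩
  apply hx₀M
  have : x₀ ∈ affineSpan ℝ F := by
    rw [hspaneq]
    exact mem_affineSpan ℝ hx₀P
  exact (hQmem x₀).1 (haff this)

theorem polytope_vertexFinset {n : ℕ} {P : Set (Fin n → ℝ)} (hP : IsPolytope P) :
    ∃ V : Finset (Fin n → ℝ), (↑V : Set (Fin n → ℝ)) = Set.extremePoints ℝ P ∧
      P = convexHull ℝ (V : Set (Fin n → ℝ)) ∧ V.Nonempty := by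
  obtain ⟨S, hSne, hPeq⟩ := hP
  have hsub : Set.extremePoints ℝ P ⊆ (S : Set (Fin n → ℝ)) := by
    rw [hPeq]; exact extremePoints_convexHull_subset
  have hfin : (Set.extremePoints ℝ P).Finite := S.finite_toSet.subset hsub
  refine ⟨hfin.toFinset, hfin.coe_toFinset, ?_, ?_⟩
  · have hcomp : IsCompact P := by rw [hPeq]; exact S.finite_toSet.isCompact_convexHull ℝ
    have hconv : Convex ℝ P := by rw [hPeq]; exact convex_convexHull ℝ _
    have hclosed : IsClosed (convexHull ℝ (Set.extremePoints ℝ P)) :=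
      hfin.isClosed_convexHull ℝ
    have := closure_convexHull_extremePoints hcomp hconv
    rw [hclosed.closure_eq] at this
    rw [hfin.coe_toFinset, this]
  · rw [Finset.nonempty_iff_ne_empty]
    intro hc
    have hPne : P.Nonempty := by
      obtain ⟨s, hs⟩ := hSne
      exact ⟨s, by rw [hPeq]; exact subset_convexHull ℝ _ (Finset.mem_coe.2 hs)⟩
    have hVempty : convexHull ℝ ((hfin.toFinset : Finset _) : Set (Fin n → ℝ)) = ∅ := by
      rw [hc]; simp
    have hPeq2 : P = convexHull ℝ ((hfin.toFinset : Finset _) : Set (Fin n → ℝ)) := by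
      have hcomp : IsCompact P := by rw [hPeq]; exact S.finite_toSet.isCompact_convexHull ℝ
      have hconv : Convex ℝ P := by rw [hPeq]; exact convex_convexHull ℝ _
      have hclosed : IsClosed (convexHull ℝ (Set.extremePoints ℝ P)) :=
        hfin.isClosed_convexHull ℝ
      have := closure_convexHull_extremePoints hcomp hconv
      rw [hclosed.closure_eq] at this
      rw [hfin.coe_toFinset, this]
    rw [hPeq2, hVempty] at hPne
    exact Set.not_nonempty_empty hPne

-- CHUNK 7: chain lemmas
theorem chain_mono {m : ℕ} {r : Fin (m+1) → ℝ} (h : ∀ i : Fin m, r i.castSucc ≤ r i.succ) :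
    ∀ s t : Fin (m+1), s ≤ t → r s ≤ r t := by
  intro s t
  induction t using Fin.induction with
  | zero =>
    intro hst
    have : s = 0 := le_antisymm hst (Fin.zero_le s)
    rw [this]
  | succ i ih =>
    intro hst
    by_cases hc : (s : ℕ) ≤ (i.castSucc : ℕ)
    · exact le_trans (ih (by rwa [Fin.le_def])) (h i)
    · have : s = i.succ := by
        apply Fin.ext
        rw [Fin.le_def] at hst
        simp only [Fin.coe_castSucc] at hc
        simp only [Fin.val_succ] at hst ⊢
        omega
      rw [this]

theorem chain_add_until {m : ℕ} {r : Fin (m+1) → ℝ} (t : Fin (m+1))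
    (h : ∀ i : Fin m, i.succ ≤ t → r i.castSucc + 1 ≤ r i.succ) :
    ∀ s : Fin (m+1), s ≤ t → r 0 + (s : ℕ) ≤ r s := by
  intro s
  induction s using Fin.induction with
  | zero => intro _; simp
  | succ i ih =>
    intro hst
    have h1 : i.succ ≤ t := hst
    have h2 : i.castSucc ≤ t := le_trans (by rw [Fin.le_def]; simp) h1
    have h3 := ih h2
    have h4 := h i h1
    have h5 : ((i.succ : Fin (m+1)) : ℕ) = ((i.castSucc : Fin (m+1)) : ℕ) + 1 := by simp
    rw [h5]
    push_cast
    linarith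

-- CHUNK 8: the main path-length bound
theorem helper_bound {n k : ℕ} (π : Equiv.Perm (Fin n)) (ε : Fin n → ℝ)
    (hε : ∀ i, ε i = 1 ∨ ε i = -1) {α : ℝ} (hα : 2*(k:ℝ)+1 ≤ α) :
    ∀ D : ℕ, ∀ P : Set (Fin n → ℝ), IsLatticePolytope k P → polytopeDim P ≤ D →
    ∀ m : ℕ, ∀ p : Fin (m+1) → (Fin n → ℝ),
    (∀ i, IsVertexOf P (p i)) →
    (∀ i : Fin m, IsEdgeOf P (p i.castSucc) (p i.succ) ∧
       dotp (signedPermVec π ε α) (p i.castSucc) < dotp (signedPermVec π ε α) (p i.succ) ∧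
       ∀ w, IsEdgeOf P (p i.castSucc) w →
         dotp (signedPermVec π ε α) w ≤ dotp (signedPermVec π ε α) (p i.succ)) →
    m ≤ D * k := by
  classical
  intro D
  induction D with
  | zero =>
    intro P hP hdim m p hvert hstep
    rcases Nat.eq_zero_or_pos m with rfl | hm
    · simp
    exfalso
    obtain ⟨hne, hu, hw, _⟩ := (hstep ⟨0, hm⟩).1
    have h1 := one_le_polytopeDim (extremePoints_subset hu) (extremePoints_subset hw) hne
    omega
  | succ D IH =>
    intro P hP hdim m p hvert hstep
    rcases Nat.eq_zero_or_pos m with rfl | hm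
    · simp
    set c := signedPermVec π ε α with hc
    obtain ⟨V, hVcoe, hPV, hVne⟩ := polytope_vertexFinset hP.1
    have hvertV : ∀ s, p s ∈ V := fun s => Finset.mem_coe.1 (by rw [hVcoe]; exact hvert s)
    have hlat : ∀ v ∈ V, ∀ i, (∃ z : ℤ, v i = (z:ℝ)) ∧ 0 ≤ v i ∧ v i ≤ (k:ℝ) := by
      intro v hv
      exact hP.2 v (by rw [IsVertexOf, ← hVcoe]; exact Finset.mem_coe.2 hv)
    set NC := Finset.univ.filter (fun i : Fin n => ∃ u ∈ V, ∃ w ∈ V, u i ≠ w i) with hNC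
    rcases NC.eq_empty_or_nonempty with hNCe | hNCne
    · exfalso
      obtain ⟨hne, _, _, _⟩ := (hstep ⟨0, hm⟩).1
      apply hne
      funext i
      by_contra hci
      have : i ∈ NC := Finset.mem_filter.2 ⟨Finset.mem_univ i,
        ⟨_, hvertV _, _, hvertV _, hci⟩⟩
      rw [hNCe] at this
      exact Finset.notMem_empty i this
    obtain ⟨a, haNC, hamax⟩ := NC.exists_max_image (fun i => (π i : ℕ)) hNCne
    have hconst : ∀ j, (π a : ℕ) < (π j : ℕ) → ∀ u ∈ V, ∀ w ∈ V, u j = w j := by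
      intro j hj u hu w hw
      by_contra hc'
      have : j ∈ NC := Finset.mem_filter.2 ⟨Finset.mem_univ j, ⟨u, hu, w, hw, hc'⟩⟩
      have := hamax j this
      omega
    set q : Fin (m+1) → ℝ := fun s => ε a * p s a with hq
    have hqint : ∀ s, ∃ z : ℤ, q s = (z:ℝ) := by
      intro s
      obtain ⟨z, hz⟩ := (hlat _ (hvertV s) a).1
      rcases hε a with h | h
      · exact ⟨z, by rw [hq]; simp [h, hz]⟩
      · exact ⟨-z, by rw [hq]; simp [h, hz]⟩
    have hqstep : ∀ {x y : Fin (m+1)}, q x < q y → q x + 1 ≤ q y := by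
      intro x y hxy
      obtain ⟨zx, hzx⟩ := hqint x
      obtain ⟨zy, hzy⟩ := hqint y
      rw [hzx, hzy] at hxy ⊢
      have : zx < zy := by exact_mod_cast hxy
      have : zx + 1 ≤ zy := this
      exact_mod_cast this
    have hqmono : ∀ i : Fin m, q i.castSucc ≤ q i.succ := by
      intro i
      by_contra hcon
      push_neg at hcon
      have hd := lex_dominance π ε hε hα
        (fun j => (hlat _ (hvertV i.castSucc) j).2)
        (fun j => (hlat _ (hvertV i.succ) j).2) a
        (fun j hj => hconst j hj _ (hvertV i.castSucc) _ (hvertV i.succ))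
        (by rw [hq] at hcon; exact hqstep hcon)
      exact absurd (hstep i).2.1 (not_lt_of_gt hd)
    have hqrange : ∀ s s' : Fin (m+1), q s' - q s ≤ (k:ℝ) := by
      intro s s'
      have h1 := (hlat _ (hvertV s) a).2
      have h2 := (hlat _ (hvertV s') a).2
      rcases hε a with h | h <;> rw [hq] <;> simp [h] <;> nlinarith [h1.1, h1.2, h2.1, h2.2]
    have hsucc_mul : (D+1) * k = D * k + k := by ring
    by_cases hlock : ∃ i : Fin m, q i.succ = q i.castSucc
    · -- lock case
      have hex : ∃ j : ℕ, ∃ hj : j < m, q (Fin.succ ⟨j, hj⟩) = q (Fin.castSucc ⟨j, hj⟩) := by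
        obtain ⟨i, hi⟩ := hlock
        exact ⟨i.val, i.isLt, by convert hi⟩
      set t := Nat.find hex with ht
      obtain ⟨htm, hteq⟩ := Nat.find_spec hex
      set tF : Fin m := ⟨t, htm⟩ with htF
      -- prefix counting
      have hprefix : (t:ℝ) ≤ k := by
        have hch := chain_add_until tF.castSucc
          (fun i hi => by
            have hiv : (i:ℕ) < t := by
              rw [Fin.le_def] at hi
              simp only [Fin.val_succ, Fin.coe_castSucc, htF] at hi
              omega
            have hne' : ¬ q (Fin.succ i) = q (Fin.castSucc i) := by
              have := Nat.find_min hex (m := (i:ℕ)) hiv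
              push_neg at this
              intro hcc
              exact (this i.isLt) (by convert hcc)
            exact hqstep (lt_of_le_of_ne (hqmono i) (Ne.symm hne')))
          tF.castSucc le_rfl
        have := hqrange 0 tF.castSucc
        simp only [Fin.coe_castSucc] at hch
        linarith
      have htk : t ≤ k := by exact_mod_cast hprefix
      -- the functional picking out coordinate a
      set gvec : Fin n → ℝ := fun j => if j = a then ε a else 0 with hgvec
      have hgval : ∀ x : Fin n → ℝ, dotp gvec x = ε a * x a := by
        intro x
        rw [dotp, hgvec]
        rw [Finset.sum_eq_single a]
        · simp
        · intro b _ hb; simp [hb]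
        · intro h; exact absurd (Finset.mem_univ a) h
      have hεa : ε a ≠ 0 := by rcases hε a with h | h <;> rw [h] <;> norm_num
      set vt := p tF.castSucc with hvt
      -- local maximality of coordinate a at vt
      have hlocal : ∀ w, IsEdgeOf P vt w → dotp gvec w ≤ dotp gvec vt := by
        intro w hw
        by_contra hcon
        push_neg at hcon
        rw [hgval, hgval] at hcon
        have hwV : w ∈ V := Finset.mem_coe.1 (by rw [hVcoe]; exact hw.2.2.1)
        have hw1 : ε a * vt a + 1 ≤ ε a * w a := by
          obtain ⟨zw, hzw⟩ := (hlat _ hwV a).1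
          obtain ⟨zv, hzv⟩ := (hlat vt (hvertV tF.castSucc) a).1
          rw [hzw, hzv] at hcon ⊢
          rcases hε a with h | h <;> rw [h] at hcon ⊢ <;> simp only [one_mul, neg_mul,
            neg_lt_neg_iff, one_mul] at hcon ⊢
          · have : zv < zw := by exact_mod_cast hcon
            have : zv + 1 ≤ zw := this
            exact_mod_cast this
          · have : zw < zv := by exact_mod_cast hcon
            have h3 : zw + 1 ≤ zv := this
            have : (zw:ℝ) + 1 ≤ zv := by exact_mod_cast h3
            linarith
        have hd := lex_dominance π ε hε hα
          (fun j => (hlat _ hwV j).2)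
          (fun j => (hlat _ (hvertV tF.succ) j).2) a
          (fun j hj => hconst j hj _ hwV _ (hvertV tF.succ))
          (by
            have hqeq : ε a * p tF.succ a = ε a * vt a := hteq
            rw [hqeq]; exact hw1)
        exact absurd ((hstep tF).2.2 w hw) (not_le_of_gt hd)
      -- global maximality of coordinate a at vt
      have hglobal : ∀ x ∈ P, dotp gvec x ≤ dotp gvec vt := by
        by_contra hcon
        push_neg at hcon
        obtain ⟨x, hxP, hxv⟩ := hcon
        have hvtx : vt ∈ Set.extremePoints ℝ (convexHull ℝ (V : Set (Fin n → ℝ))) := by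
          rw [← hPV]; exact hvert tF.castSucc
        obtain ⟨w, hwe, hwc⟩ := improving_neighbor V.card V gvec vt le_rfl hvtx
          ⟨x, by rw [← hPV]; exact hxP, hxv⟩
        rw [← hPV] at hwe
        exact absurd hwc (not_lt_of_ge (hlocal w hwe))
      -- the face
      set T := argmaxSet V gvec with hT
      set F := convexHull ℝ ((T : Finset _) : Set (Fin n → ℝ)) with hF
      have hmemT : ∀ s : Fin (m+1), (t:ℕ) ≤ (s:ℕ) → p s ∈ T := by
        intro s hs
        have hps : q s = q tF.castSucc := by
          refine le_antisymm ?_ ?_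
          · have := hglobal (p s) (extremePoints_subset (hvert s))
            rw [hgval, hgval] at this
            exact this
          · exact chain_mono hqmono tF.castSucc s (by rw [Fin.le_def]; simpa using hs)
        refine mem_argmaxSet.2 ⟨hvertV s, fun u hu => ?_⟩
        have h1 := hglobal u (by rw [hPV]; exact subset_convexHull ℝ _ (Finset.mem_coe.2 hu))
        have h2 : dotp gvec (p s) = dotp gvec vt := by rw [hgval, hgval]; exact hps
        rw [h2]
        exact h1
      have hTne : T.Nonempty := ⟨p tF.castSucc, hmemT tF.castSucc (by simp [htF])⟩
      have hFP : F ⊆ P := by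
        rw [hPV]
        exact convexHull_mono (fun s hs =>
          Finset.mem_coe.2 (argmaxSet_subset V gvec (Finset.mem_coe.1 hs)))
      have hextF : Set.extremePoints ℝ F ⊆ Set.extremePoints ℝ P := by
        rw [hPV]
        exact ((isExposed_argmaxSet V gvec hVne).isExtreme).extremePoints_subset_extremePoints
      have hFlat : IsLatticePolytope k F := by
        refine ⟨⟨T, hTne, rfl⟩, fun v hv i => hP.2 v (hextF hv) i⟩
      have hFdim : polytopeDim F ≤ D := by
        have hnc' : ∃ s ∈ V, ∃ t' ∈ V, dotp gvec s ≠ dotp gvec t' := by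
          obtain ⟨u, hu, w, hw, huv⟩ := (Finset.mem_filter.1 haNC).2
          refine ⟨u, hu, w, hw, ?_⟩
          rw [hgval, hgval]
          exact fun h => huv (mul_left_cancel₀ hεa h)
        have hlt := polytopeDim_argmaxFace_lt V hVne gvec hnc'
        rw [← hT] at hlt
        rw [← hF] at hlt
        rw [← hPV] at hlt
        omega
      -- the suffix path
      set m' := m - t with hm'
      set p' : Fin (m'+1) → (Fin n → ℝ) := fun s => p ⟨t + s.val, by omega⟩ with hp'
      have hidx1 : ∀ i : Fin m', p' i.castSucc = p (Fin.castSucc ⟨t + i.val, by omega⟩) := by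
        intro i
        apply congrArg p
        apply Fin.ext
        simp [hp']
      have hidx2 : ∀ i : Fin m', p' i.succ = p (Fin.succ ⟨t + i.val, by omega⟩) := by
        intro i
        apply congrArg p
        apply Fin.ext
        simp [hp']
        omega
      have hvert' : ∀ s, IsVertexOf F (p' s) := by
        intro s
        have hms : p' s ∈ T := hmemT ⟨t + s.val, by omega⟩ (by simp)
        exact inter_extremePoints_subset_extremePoints_of_subset hFP
          ⟨subset_convexHull ℝ _ (Finset.mem_coe.2 hms), hvert _⟩
      have hstep' : ∀ i : Fin m', IsEdgeOf F (p' i.castSucc) (p' i.succ) ∧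
          dotp c (p' i.castSucc) < dotp c (p' i.succ) ∧
          ∀ w, IsEdgeOf F (p' i.castSucc) w → dotp c w ≤ dotp c (p' i.succ) := by
        intro i
        set j : Fin m := ⟨t + i.val, by omega⟩ with hj
        have e1 : p' i.castSucc = p j.castSucc := hidx1 i
        have e2 : p' i.succ = p j.succ := hidx2 i
        refine ⟨?_, ?_, ?_⟩
        · rw [e1, e2, hF]
          apply isEdgeOf_argmaxFace_of_isEdgeOf V gvec
          · exact subset_convexHull ℝ _ (Finset.mem_coe.2 (hmemT j.castSucc (by simp only [Fin.coe_castSucc, hj]; omega)))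
          · exact subset_convexHull ℝ _ (Finset.mem_coe.2 (hmemT j.succ (by simp only [Fin.val_succ, hj]; omega)))
          · have := (hstep j).1
            rw [hPV] at this
            exact this
        · rw [e1, e2]; exact (hstep j).2.1
        · intro w hw
          rw [e1] at hw
          rw [hF] at hw
          have hwP := isEdgeOf_of_isEdgeOf_argmaxFace V hVne gvec hw
          rw [← hPV] at hwP
          rw [e2]
          exact (hstep j).2.2 w hwP
      have hm'bound := IH F hFlat hFdim m' p' hvert' hstep'
      omega
    · -- no lock: all steps strictly increase coordinate a
      push_neg at hlock
      have hch := chain_add_until (Fin.last m)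
        (fun i _ => hqstep (lt_of_le_of_ne (hqmono i) (Ne.symm (hlock i))))
        (Fin.last m) le_rfl
      have hrange := hqrange 0 (Fin.last m)
      simp only [Fin.val_last] at hch
      have : (m:ℝ) ≤ k := by linarith
      have : m ≤ k := by exact_mod_cast this
      omega

/-- **Lemma (greatest improvement paths to the `x_σ`-maximum).**
Let `P ⊆ ℝ^n` be a `(0,k)`-lattice polytope of dimension `d`, `σ = (π, ε)` a
signed permutation, `α ≥ 2k+1`, and `x_σ` the associated vector. Any sequence of
greatest-improvement steps for `x_σ` starting from any vertex and ending at a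
vertex with no `x_σ`-improving neighbor ends at the unique `x_σ`-maximal vertex
and has length at most `dk`. -/
theorem greatest_improvement_path_bound {n : ℕ} (k : ℕ) (P : Set (Fin n → ℝ))
    (hP : IsLatticePolytope k P)
    (d : ℕ) (hd : d = polytopeDim P)
    (π : Equiv.Perm (Fin n)) (ε : Fin n → ℝ) (hε : ∀ i, ε i = 1 ∨ ε i = -1)
    (α : ℝ) (hα : 2 * (k : ℝ) + 1 ≤ α)
    (m : ℕ) (p : Fin (m + 1) → (Fin n → ℝ))
    (hvert : ∀ i, IsVertexOf P (p i))
    (hstep : ∀ i : Fin m,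
      IsEdgeOf P (p i.castSucc) (p i.succ) ∧
      dotp (signedPermVec π ε α) (p i.castSucc) <
        dotp (signedPermVec π ε α) (p i.succ) ∧
      ∀ w : Fin n → ℝ, IsEdgeOf P (p i.castSucc) w →
        dotp (signedPermVec π ε α) w ≤ dotp (signedPermVec π ε α) (p i.succ))
    (hlast : ∀ w : Fin n → ℝ, IsEdgeOf P (p (Fin.last m)) w →
      dotp (signedPermVec π ε α) w ≤ dotp (signedPermVec π ε α) (p (Fin.last m))) :
    (∀ x ∈ P, dotp (signedPermVec π ε α) x ≤
        dotp (signedPermVec π ε α) (p (Fin.last m))) ∧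
    (∀ w : Fin n → ℝ, IsVertexOf P w →
      (∀ x ∈ P, dotp (signedPermVec π ε α) x ≤ dotp (signedPermVec π ε α) w) →
      w = p (Fin.last m)) ∧
    m ≤ d * k := by
  classical
  set c := signedPermVec π ε α with hc
  obtain ⟨V, hVcoe, hPV, hVne⟩ := polytope_vertexFinset hP.1
  have hlastP : p (Fin.last m) ∈ P := extremePoints_subset (hvert _)
  have h1 : ∀ x ∈ P, dotp c x ≤ dotp c (p (Fin.last m)) := by
    by_contra h
    push_neg at h
    obtain ⟨x, hxP, hx⟩ := h
    have hvext : p (Fin.last m) ∈ Set.extremePoints ℝ (convexHull ℝ (V : Set (Fin n → ℝ))) := by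
      rw [← hPV]; exact hvert _
    obtain ⟨w, hwe, hwc⟩ := improving_neighbor V.card V c (p (Fin.last m)) le_rfl hvext
      ⟨x, by rw [← hPV]; exact hxP, hx⟩
    rw [← hPV] at hwe
    exact absurd (hlast w hwe) (not_le_of_gt hwc)
  refine ⟨h1, ?_, ?_⟩
  · intro w hw hwmax
    by_contra hne
    have heq : dotp c w = dotp c (p (Fin.last m)) :=
      le_antisymm (h1 w (extremePoints_subset hw)) (hwmax _ hlastP)
    exact lex_ne (k := k) π ε hε hα (hP.2 w hw) (hP.2 _ (hvert (Fin.last m))) hne heq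
  · have := helper_bound π ε hε hα (polytopeDim P) P hP le_rfl m p hvert hstep
    rw [hd]
    exact this
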